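/- Let Γ be a cancellation monoid with neutral element e and A = ⊕_{γ∈Γ} A_γ a Γ-graded ring whose degree-e part A_e is a local ring in the classical sense. Let 𝔏 be the sum of all proper graded left ideals of A, ℜ the sum of all proper graded right ideals of A, and 𝔐 the sum of all proper graded two-sided ideals of A. Then 𝔏 = 𝔐 = ℜ as subsets of A. -/

import Mathlib

section

variable {Γ : Type*} [AddCancelMonoid Γ] [DecidableEq Γ]
variable {A : Type*} [Ring A] (𝒜 : Γ → AddSubgroup A) [GradedRing 𝒜]

/-- A left ideal of `A` is graded if it contains all homogeneous components of each of
its elements (equivalently, it is generated by homogeneous elements). -/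
def Ideal.IsGradedLeft (I : Ideal A) : Prop :=
  ∀ a ∈ I, ∀ γ : Γ, (DirectSum.decompose 𝒜 a γ : A) ∈ I

/-- A right ideal of `A` (a submodule of `A` over `Aᵐᵒᵖ`) is graded if it contains all
homogeneous components of each of its elements. -/
def Ideal.IsGradedRight (I : Submodule Aᵐᵒᵖ A) : Prop :=
  ∀ a ∈ I, ∀ γ : Γ, (DirectSum.decompose 𝒜 a γ : A) ∈ I

/-- A two-sided ideal of `A` is graded if it contains all homogeneous components of each
of its elements. -/
def TwoSidedIdeal.IsGraded (I : TwoSidedIdeal A) : Prop :=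
  ∀ a ∈ I, ∀ γ : Γ, (DirectSum.decompose 𝒜 a γ : A) ∈ I

namespace Prop23Aux

lemma inv_comm {γ δ : Γ} (h : γ + δ = 0) : δ + γ = 0 :=
  add_right_cancel (b := δ) (by rw [add_assoc, h, add_zero, zero_add])

variable {𝒜}

/-- The degree-`γ` component of `r * a` with `r` homogeneous of degree `μ` is either `0`
or of the form `r * aᵥ` with `μ + ν = γ`. -/
lemma proj_mul_left {μ : Γ} {r a : A} (hr : r ∈ 𝒜 μ) (γ : Γ) :
    (DirectSum.decompose 𝒜 (r * a) γ : A) = 0 ∨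
      ∃ ν : Γ, μ + ν = γ ∧
        (DirectSum.decompose 𝒜 (r * a) γ : A) = r * (DirectSum.decompose 𝒜 a ν : A) := by
  classical
  have hsum : r * a = ∑ ν ∈ (DirectSum.decompose 𝒜 a).support,
      r * (DirectSum.decompose 𝒜 a ν : A) := by
    rw [← Finset.mul_sum, DirectSum.sum_support_decompose]
  have h2 : (DirectSum.decompose 𝒜 (r * a) γ : A) =
      ∑ ν ∈ (DirectSum.decompose 𝒜 a).support,
        (DirectSum.decompose 𝒜 (r * (DirectSum.decompose 𝒜 a ν : A)) γ : A) := by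
    rw [← GradedRing.proj_apply, hsum, map_sum]
    simp only [GradedRing.proj_apply]
  by_cases hex : ∃ ν ∈ (DirectSum.decompose 𝒜 a).support, μ + ν = γ
  · obtain ⟨ν₀, hmem, hν₀⟩ := hex
    refine Or.inr ⟨ν₀, hν₀, ?_⟩
    rw [h2, Finset.sum_eq_single_of_mem ν₀ hmem]
    · exact DirectSum.decompose_of_mem_same 𝒜
        (hν₀ ▸ SetLike.mul_mem_graded hr (DirectSum.decompose 𝒜 a ν₀).2)
    · intro ν _ hne
      exact DirectSum.decompose_of_mem_ne 𝒜
        (SetLike.mul_mem_graded hr (DirectSum.decompose 𝒜 a ν).2)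
        (fun h => hne (add_left_cancel (h.trans hν₀.symm)))
  · refine Or.inl ?_
    rw [h2]
    refine Finset.sum_eq_zero fun ν hν => ?_
    exact DirectSum.decompose_of_mem_ne 𝒜
      (SetLike.mul_mem_graded hr (DirectSum.decompose 𝒜 a ν).2)
      (fun h => hex ⟨ν, hν, h⟩)

/-- The degree-`γ` component of `a * r` with `r` homogeneous of degree `μ` is either `0`
or of the form `aᵥ * r` with `ν + μ = γ`. -/
lemma proj_mul_right {μ : Γ} {r a : A} (hr : r ∈ 𝒜 μ) (γ : Γ) :
    (DirectSum.decompose 𝒜 (a * r) γ : A) = 0 ∨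
      ∃ ν : Γ, ν + μ = γ ∧
        (DirectSum.decompose 𝒜 (a * r) γ : A) = (DirectSum.decompose 𝒜 a ν : A) * r := by
  classical
  have hsum : a * r = ∑ ν ∈ (DirectSum.decompose 𝒜 a).support,
      (DirectSum.decompose 𝒜 a ν : A) * r := by
    rw [← Finset.sum_mul, DirectSum.sum_support_decompose]
  have h2 : (DirectSum.decompose 𝒜 (a * r) γ : A) =
      ∑ ν ∈ (DirectSum.decompose 𝒜 a).support,
        (DirectSum.decompose 𝒜 ((DirectSum.decompose 𝒜 a ν : A) * r) γ : A) := by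
    rw [← GradedRing.proj_apply, hsum, map_sum]
    simp only [GradedRing.proj_apply]
  by_cases hex : ∃ ν ∈ (DirectSum.decompose 𝒜 a).support, ν + μ = γ
  · obtain ⟨ν₀, hmem, hν₀⟩ := hex
    refine Or.inr ⟨ν₀, hν₀, ?_⟩
    rw [h2, Finset.sum_eq_single_of_mem ν₀ hmem]
    · exact DirectSum.decompose_of_mem_same 𝒜
        (hν₀ ▸ SetLike.mul_mem_graded (DirectSum.decompose 𝒜 a ν₀).2 hr)
    · intro ν _ hne
      exact DirectSum.decompose_of_mem_ne 𝒜
        (SetLike.mul_mem_graded (DirectSum.decompose 𝒜 a ν).2 hr)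
        (fun h => hne (add_right_cancel (h.trans hν₀.symm)))
  · refine Or.inl ?_
    rw [h2]
    refine Finset.sum_eq_zero fun ν hν => ?_
    exact DirectSum.decompose_of_mem_ne 𝒜
      (SetLike.mul_mem_graded (DirectSum.decompose 𝒜 a ν).2 hr)
      (fun h => hex ⟨ν, hν, h⟩)

/-- The two-sided inverse of a homogeneous element is homogeneous, of "inverse" degree. -/
lemma exists_homog_inv [Nontrivial A] {γ : Γ} {x v : A} (hx : x ∈ 𝒜 γ)
    (h1 : x * v = 1) (h2 : v * x = 1) : ∃ δ, γ + δ = 0 ∧ v ∈ 𝒜 δ := by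
  have h0 : (DirectSum.decompose 𝒜 (x * v) 0 : A) = 1 := by
    rw [h1]
    exact DirectSum.decompose_of_mem_same 𝒜 (SetLike.one_mem_graded 𝒜)
  rcases proj_mul_left hx 0 with h | ⟨δ, hδ, hval⟩
  · rw [h0] at h
    exact absurd h one_ne_zero
  · refine ⟨δ, hδ, ?_⟩
    have hxv : x * (DirectSum.decompose 𝒜 v δ : A) = 1 := by rw [← hval, h0]
    have hv : (DirectSum.decompose 𝒜 v δ : A) = v := by
      have h3 : (v * x) * (DirectSum.decompose 𝒜 v δ : A)
          = v * (x * (DirectSum.decompose 𝒜 v δ : A)) := mul_assoc _ _ _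
      rwa [h2, one_mul, hxv, mul_one] at h3
    exact hv ▸ (DirectSum.decompose 𝒜 v δ).2

variable [IsLocalRing (𝒜 0)]

lemma coe_mul0 (a b : (𝒜 0)) : ((a * b : 𝒜 0) : A) = (a : A) * (b : A) := rfl

lemma coe_one0 : (((1 : 𝒜 0)) : A) = 1 := rfl

include 𝒜 in
lemma ntA : Nontrivial A :=
  nontrivial_of_ne 1 0 fun h => one_ne_zero (α := 𝒜 0) (Subtype.ext (by simpa using h))

/-- A homogeneous element with a homogeneous left inverse is a unit
(uses that `𝒜 0` is local). -/
lemma isUnit_of_left_inv {γ δ : Γ} {x b : A}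
    (hx : x ∈ 𝒜 γ) (hb : b ∈ 𝒜 δ) (h : b * x = 1) : IsUnit x := by
  haveI : Nontrivial A := ntA (𝒜 := 𝒜)
  have hδγ : δ + γ = 0 := DirectSum.degree_eq_of_mem_mem 𝒜
    (h ▸ SetLike.mul_mem_graded hb hx) (SetLike.one_mem_graded 𝒜) one_ne_zero
  have hγδ : γ + δ = 0 := inv_comm hδγ
  set E : 𝒜 0 := ⟨x * b, hγδ ▸ SetLike.mul_mem_graded hx hb⟩ with hEdef
  have hEE : E * E = E := Subtype.ext <| by
    show (x * b) * (x * b) = x * b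
    rw [mul_assoc, ← mul_assoc b x b, h, one_mul]
  rcases IsLocalRing.isUnit_or_isUnit_of_add_one
      (a := E) (b := 1 - E) (by abel) with hu | hu
  · have hE1 : E = 1 := hu.mul_left_cancel (hEE.trans (mul_one E).symm)
    have hxb : x * b = 1 := by
      have := congrArg Subtype.val hE1
      simpa [hEdef, coe_one0] using this
    exact ⟨⟨x, b, hxb, h⟩, rfl⟩
  · have hE0 : E = 0 := hu.mul_left_cancel
      (by rw [mul_zero, sub_mul, one_mul, hEE, sub_self])
    have hxb : x * b = 0 := by
      have := congrArg Subtype.val hE0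
      simpa [hEdef, coe_one0] using this
    have hx0 : x = 0 := by
      have hxx : x * (b * x) = x := by rw [h, mul_one]
      rw [← mul_assoc, hxb, zero_mul] at hxx
      exact hxx.symm
    rw [hx0, mul_zero] at h
    exact absurd h.symm one_ne_zero

/-- A homogeneous element with a homogeneous right inverse is a unit. -/
lemma isUnit_of_right_inv {γ δ : Γ} {x b : A}
    (hx : x ∈ 𝒜 γ) (hb : b ∈ 𝒜 δ) (h : x * b = 1) : IsUnit x := by
  haveI : Nontrivial A := ntA (𝒜 := 𝒜)
  have hγδ : γ + δ = 0 := DirectSum.degree_eq_of_mem_mem 𝒜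
    (h ▸ SetLike.mul_mem_graded hx hb) (SetLike.one_mem_graded 𝒜) one_ne_zero
  have hδγ : δ + γ = 0 := inv_comm hγδ
  set E : 𝒜 0 := ⟨b * x, hδγ ▸ SetLike.mul_mem_graded hb hx⟩ with hEdef
  have hEE : E * E = E := Subtype.ext <| by
    show (b * x) * (b * x) = b * x
    rw [mul_assoc, ← mul_assoc x b x, h, one_mul]
  rcases IsLocalRing.isUnit_or_isUnit_of_add_one
      (a := E) (b := 1 - E) (by abel) with hu | hu
  · have hE1 : E = 1 := hu.mul_left_cancel (hEE.trans (mul_one E).symm)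
    have hbx : b * x = 1 := by
      have := congrArg Subtype.val hE1
      simpa [hEdef, coe_one0] using this
    exact ⟨⟨x, b, h, hbx⟩, rfl⟩
  · have hE0 : E = 0 := hu.mul_left_cancel
      (by rw [mul_zero, sub_mul, one_mul, hEE, sub_self])
    have hbx : b * x = 0 := by
      have := congrArg Subtype.val hE0
      simpa [hEdef, coe_one0] using this
    have hx0 : x = 0 := by
      have hxx : (x * b) * x = x := by rw [h, one_mul]
      rw [mul_assoc, hbx, mul_zero] at hxx
      exact hxx.symm
    rw [hx0, zero_mul] at h
    exact absurd h.symm one_ne_zero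

lemma not_isUnit_mul_left {γ μ : Γ} {x r : A}
    (hx : x ∈ 𝒜 γ) (hnx : ¬ IsUnit x) (hr : r ∈ 𝒜 μ) : ¬ IsUnit (r * x) := by
  haveI : Nontrivial A := ntA (𝒜 := 𝒜)
  intro h
  have h1 : (r * x) * ↑h.unit⁻¹ = 1 := h.mul_val_inv
  have h2 : (↑h.unit⁻¹ : A) * (r * x) = 1 := h.val_inv_mul
  obtain ⟨δ, hδ, hvmem⟩ := exists_homog_inv (SetLike.mul_mem_graded hr hx) h1 h2
  exact hnx (isUnit_of_left_inv hx (SetLike.mul_mem_graded hvmem hr)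
    (by rw [mul_assoc]; exact h2))

lemma not_isUnit_mul_right {γ μ : Γ} {x r : A}
    (hx : x ∈ 𝒜 γ) (hnx : ¬ IsUnit x) (hr : r ∈ 𝒜 μ) : ¬ IsUnit (x * r) := by
  haveI : Nontrivial A := ntA (𝒜 := 𝒜)
  intro h
  have h1 : (x * r) * ↑h.unit⁻¹ = 1 := h.mul_val_inv
  have h2 : (↑h.unit⁻¹ : A) * (x * r) = 1 := h.val_inv_mul
  obtain ⟨δ, hδ, hvmem⟩ := exists_homog_inv (SetLike.mul_mem_graded hx hr) h1 h2
  exact hnx (isUnit_of_right_inv hx (SetLike.mul_mem_graded hr hvmem)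
    (by rw [← mul_assoc]; exact h1))

lemma not_isUnit_add {γ : Γ} {x y : A} (hx : x ∈ 𝒜 γ) (hy : y ∈ 𝒜 γ)
    (hnx : ¬ IsUnit x) (hny : ¬ IsUnit y) : ¬ IsUnit (x + y) := by
  haveI : Nontrivial A := ntA (𝒜 := 𝒜)
  intro h
  have h1 : (x + y) * ↑h.unit⁻¹ = 1 := h.mul_val_inv
  have h2 : (↑h.unit⁻¹ : A) * (x + y) = 1 := h.val_inv_mul
  obtain ⟨δ, hδ, hv⟩ := exists_homog_inv (add_mem hx hy) h1 h2
  have hδγ : δ + γ = 0 := inv_comm hδ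
  set X : 𝒜 0 := ⟨(↑h.unit⁻¹ : A) * x, hδγ ▸ SetLike.mul_mem_graded hv hx⟩ with hXdef
  set Y : 𝒜 0 := ⟨(↑h.unit⁻¹ : A) * y, hδγ ▸ SetLike.mul_mem_graded hv hy⟩ with hYdef
  have hXY : X + Y = 1 := Subtype.ext <| by
    show (↑h.unit⁻¹ : A) * x + (↑h.unit⁻¹ : A) * y = 1
    rw [← mul_add]
    exact h2
  rcases IsLocalRing.isUnit_or_isUnit_of_add_one hXY with h' | h'
  · obtain ⟨c, hc⟩ := h'
    have hc1 : ((↑c⁻¹ : 𝒜 0) : A) * ((↑h.unit⁻¹ : A) * x) = 1 := by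
      have hcc : (↑c⁻¹ * ↑c : 𝒜 0) = 1 := c.inv_mul
      have := congrArg (fun z : 𝒜 0 => (z : A)) hcc
      rw [hc] at this
      simpa [hXdef, coe_mul0, coe_one0] using this
    have hmem : ((↑c⁻¹ : 𝒜 0) : A) * (↑h.unit⁻¹ : A) ∈ 𝒜 (0 + δ) :=
      SetLike.mul_mem_graded (↑c⁻¹ : 𝒜 0).2 hv
    rw [zero_add] at hmem
    exact hnx (isUnit_of_left_inv hx hmem (by rw [mul_assoc]; exact hc1))
  · obtain ⟨c, hc⟩ := h'
    have hc1 : ((↑c⁻¹ : 𝒜 0) : A) * ((↑h.unit⁻¹ : A) * y) = 1 := by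
      have hcc : (↑c⁻¹ * ↑c : 𝒜 0) = 1 := c.inv_mul
      have := congrArg (fun z : 𝒜 0 => (z : A)) hcc
      rw [hc] at this
      simpa [hYdef, coe_mul0, coe_one0] using this
    have hmem : ((↑c⁻¹ : 𝒜 0) : A) * (↑h.unit⁻¹ : A) ∈ 𝒜 (0 + δ) :=
      SetLike.mul_mem_graded (↑c⁻¹ : 𝒜 0).2 hv
    rw [zero_add] at hmem
    exact hny (isUnit_of_left_inv hy hmem (by rw [mul_assoc]; exact hc1))

variable (𝒜)

/-- The set of elements all of whose homogeneous components are non-units. -/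
def Lset : Set A := {a | ∀ γ : Γ, ¬ IsUnit (DirectSum.decompose 𝒜 a γ : A)}

variable {𝒜}

lemma zero_mem_L : (0 : A) ∈ Lset 𝒜 := by
  haveI : Nontrivial A := ntA (𝒜 := 𝒜)
  intro γ
  rw [DirectSum.decompose_zero]
  simp

lemma add_mem_L {a b : A} (ha : a ∈ Lset 𝒜) (hb : b ∈ Lset 𝒜) : a + b ∈ Lset 𝒜 := by
  intro γ
  have hcomp : (DirectSum.decompose 𝒜 (a + b) γ : A)
      = (DirectSum.decompose 𝒜 a γ : A) + (DirectSum.decompose 𝒜 b γ : A) := by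
    rw [← GradedRing.proj_apply, ← GradedRing.proj_apply, ← GradedRing.proj_apply, map_add]
  rw [hcomp]
  exact not_isUnit_add (DirectSum.decompose 𝒜 a γ).2 (DirectSum.decompose 𝒜 b γ).2
    (ha γ) (hb γ)

lemma neg_mem_L {a : A} (ha : a ∈ Lset 𝒜) : -a ∈ Lset 𝒜 := by
  intro γ
  have hcomp : (DirectSum.decompose 𝒜 (-a) γ : A) = -(DirectSum.decompose 𝒜 a γ : A) := by
    rw [← GradedRing.proj_apply, ← GradedRing.proj_apply, map_neg]
  rw [hcomp]
  intro h
  exact ha γ (by simpa using h.neg)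

lemma mul_left_mem_L (r : A) {a : A} (ha : a ∈ Lset 𝒜) : r * a ∈ Lset 𝒜 := by
  haveI : Nontrivial A := ntA (𝒜 := 𝒜)
  induction r using DirectSum.Decomposition.inductionOn 𝒜 with
  | zero => rw [zero_mul]; exact zero_mem_L
  | @homogeneous μ r =>
    intro γ
    rcases proj_mul_left r.2 γ with h0 | ⟨ν, hν, hval⟩
    · rw [h0]; simp
    · rw [hval]
      exact not_isUnit_mul_left (DirectSum.decompose 𝒜 a ν).2 (ha ν) r.2
  | add x y hx hy => rw [add_mul]; exact add_mem_L hx hy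

lemma mul_right_mem_L (r : A) {a : A} (ha : a ∈ Lset 𝒜) : a * r ∈ Lset 𝒜 := by
  haveI : Nontrivial A := ntA (𝒜 := 𝒜)
  induction r using DirectSum.Decomposition.inductionOn 𝒜 with
  | zero => rw [mul_zero]; exact zero_mem_L
  | @homogeneous μ r =>
    intro γ
    rcases proj_mul_right r.2 γ with h0 | ⟨ν, hν, hval⟩
    · rw [h0]; simp
    · rw [hval]
      exact not_isUnit_mul_right (DirectSum.decompose 𝒜 a ν).2 (ha ν) r.2
  | add x y hx hy => rw [mul_add]; exact add_mem_L hx hy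

lemma comp_mem_L {a : A} (ha : a ∈ Lset 𝒜) (γ : Γ) :
    (DirectSum.decompose 𝒜 a γ : A) ∈ Lset 𝒜 := by
  haveI : Nontrivial A := ntA (𝒜 := 𝒜)
  intro γ'
  by_cases h : γ = γ'
  · subst h
    rw [DirectSum.decompose_of_mem_same 𝒜 (DirectSum.decompose 𝒜 a γ).2]
    exact ha γ
  · rw [DirectSum.decompose_of_mem_ne 𝒜 (DirectSum.decompose 𝒜 a γ).2 h]
    simp

lemma one_not_mem_L : (1 : A) ∉ Lset 𝒜 := fun h =>
  h 0 (by
    rw [DirectSum.decompose_of_mem_same 𝒜 (SetLike.one_mem_graded 𝒜)]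
    exact isUnit_one)

variable (𝒜)

/-- `Lset` as a left ideal. -/
def LIdeal : Ideal A where
  carrier := Lset 𝒜
  add_mem' := add_mem_L
  zero_mem' := zero_mem_L
  smul_mem' := fun c _ hx => mul_left_mem_L c hx

/-- `Lset` as a right ideal. -/
def LRight : Submodule Aᵐᵒᵖ A where
  carrier := Lset 𝒜
  add_mem' := add_mem_L
  zero_mem' := zero_mem_L
  smul_mem' := fun c x hx => by
    rw [MulOpposite.smul_eq_mul_unop]
    exact mul_right_mem_L c.unop hx

/-- `Lset` as a two-sided ideal. -/
def LTwo : TwoSidedIdeal A :=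
  TwoSidedIdeal.mk' (Lset 𝒜) zero_mem_L add_mem_L neg_mem_L
    (fun hy => mul_left_mem_L _ hy) (fun hx => mul_right_mem_L _ hx)

lemma coe_LIdeal : ((LIdeal 𝒜 : Ideal A) : Set A) = Lset 𝒜 := rfl

lemma coe_LRight : ((LRight 𝒜 : Submodule Aᵐᵒᵖ A) : Set A) = Lset 𝒜 := rfl

lemma mem_LTwo {a : A} : a ∈ LTwo 𝒜 ↔ a ∈ Lset 𝒜 :=
  TwoSidedIdeal.mem_mk' _ _ _ _ _ _ a

lemma coe_LTwo : ((LTwo 𝒜 : TwoSidedIdeal A) : Set A) = Lset 𝒜 :=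
  TwoSidedIdeal.coe_mk' _ _ _ _ _ _

lemma sSup_left_eq :
    (sSup {I : Ideal A | Ideal.IsGradedLeft 𝒜 I ∧ I ≠ ⊤} : Ideal A) = LIdeal 𝒜 := by
  refine le_antisymm (sSup_le fun J hJ => fun a haJ => fun γ => fun hunit => ?_)
    (le_sSup ⟨fun a ha γ => comp_mem_L ha γ, fun h => one_not_mem_L (𝒜 := 𝒜) ?_⟩)
  · exact hJ.2 (J.eq_top_of_isUnit_mem (hJ.1 a haJ γ) hunit)
  · exact (Ideal.eq_top_iff_one _).mp h

lemma sSup_two_eq :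
    (sSup {I : TwoSidedIdeal A | TwoSidedIdeal.IsGraded 𝒜 I ∧ I ≠ ⊤} : TwoSidedIdeal A)
      = LTwo 𝒜 := by
  refine le_antisymm (sSup_le fun J hJ => ?_) (le_sSup ⟨?_, ?_⟩)
  · intro a haJ
    rw [mem_LTwo]
    intro γ hunit
    refine hJ.2 (J.one_mem_iff.mp ?_)
    have hmem : (DirectSum.decompose 𝒜 a γ : A) ∈ J := hJ.1 a haJ γ
    have := J.mul_mem_left (↑hunit.unit⁻¹) _ hmem
    rwa [hunit.val_inv_mul] at this
  · intro a ha γ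
    rw [mem_LTwo] at ha ⊢
    exact comp_mem_L ha γ
  · intro h
    have h1 : (1 : A) ∈ LTwo 𝒜 := h ▸ TwoSidedIdeal.mem_top A
    rw [mem_LTwo] at h1
    exact one_not_mem_L (𝒜 := 𝒜) h1

lemma sSup_right_eq :
    (sSup {I : Submodule Aᵐᵒᵖ A | Ideal.IsGradedRight 𝒜 I ∧ I ≠ ⊤} : Submodule Aᵐᵒᵖ A)
      = LRight 𝒜 := by
  refine le_antisymm (sSup_le fun J hJ => fun a haJ => fun γ => fun hunit => ?_)
    (le_sSup ⟨fun a ha γ => comp_mem_L ha γ, fun h => one_not_mem_L (𝒜 := 𝒜) ?_⟩)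
  · refine hJ.2 (Submodule.eq_top_iff'.mpr fun b => ?_)
    have hmem : (DirectSum.decompose 𝒜 a γ : A) ∈ J := hJ.1 a haJ γ
    have h1 : (1 : A) ∈ J := by
      have := J.smul_mem (MulOpposite.op (↑hunit.unit⁻¹ : A)) hmem
      rwa [MulOpposite.smul_eq_mul_unop, MulOpposite.unop_op, hunit.mul_val_inv] at this
    have := J.smul_mem (MulOpposite.op b) h1
    rwa [MulOpposite.smul_eq_mul_unop, MulOpposite.unop_op, one_mul] at this
  · exact Submodule.eq_top_iff'.mp h 1

end Prop23Aux

/-- **Proposition 2.3(iv).**  Let `A` be a `Γ`-graded ring whose degree-`0` part is a local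
ring in the classical sense, `𝔏` the sum of all proper graded left ideals, `ℜ` the sum of
all proper graded right ideals, and `𝔐` the sum of all proper graded two-sided ideals of
`A`.  Then `𝔏 = 𝔐 = ℜ` as subsets of `A`. -/
theorem sSup_proper_graded_left_eq_twoSided_eq_right [IsLocalRing (𝒜 0)] :
    (((sSup {I : Ideal A | Ideal.IsGradedLeft 𝒜 I ∧ I ≠ ⊤} : Ideal A) : Set A) =
        ((sSup {I : TwoSidedIdeal A | TwoSidedIdeal.IsGraded 𝒜 I ∧ I ≠ ⊤} :
          TwoSidedIdeal A) : Set A)) ∧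
    (((sSup {I : TwoSidedIdeal A | TwoSidedIdeal.IsGraded 𝒜 I ∧ I ≠ ⊤} :
          TwoSidedIdeal A) : Set A) =
        ((sSup {I : Submodule Aᵐᵒᵖ A | Ideal.IsGradedRight 𝒜 I ∧ I ≠ ⊤} :
          Submodule Aᵐᵒᵖ A) : Set A)) := by
  rw [Prop23Aux.sSup_left_eq, Prop23Aux.sSup_two_eq, Prop23Aux.sSup_right_eq,
    Prop23Aux.coe_LIdeal, Prop23Aux.coe_LRight, Prop23Aux.coe_LTwo]
  exact ⟨rfl, rfl⟩

end
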